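/- arXiv:1703.01907 — 2 statements merged into one kernel-verified Lean document; each statement's English description precedes it below -/
import Mathlib

section
/- Let β ≥ 1, α < β + 1 be real numbers and λ a real constant. For x > 0, the function G(x) = x^{β−α+1}/(β−α+1) · ∑_{n=0}^∞ [ (c)_n / ((c+1)_n (3/2)_n) ] (−λ²x^{2β}/4)ⁿ/n!, where c = −α/(2β) + 1/(2β) + 1/2, satisfies G'(x) = sin(λx^β)/(λx^α). -/
noncomputable def poch (a : ℝ) (n : ℕ) : ℝ := ∏ i ∈ Finset.range n, (a + (i : ℝ))

lemma poch_succ (a : ℝ) (n : ℕ) : poch a (n+1) = poch a n * (a + n) := Finset.prod_range_succ _ _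

lemma poch_pos {a : ℝ} (ha : 0 < a) (n : ℕ) : 0 < poch a n :=
  Finset.prod_pos fun i _ => by positivity

lemma poch_shift (a : ℝ) (n : ℕ) : poch (a+1) n * a = poch a n * (a + n) := by
  induction n with
  | zero => simp [poch]
  | succ n ih =>
    rw [poch_succ, poch_succ]
    push_cast
    linear_combination (a + 1 + (n:ℝ)) * ih

lemma poch_three_halves (n : ℕ) :
    poch (3/2) n = ((2*n+1).factorial : ℝ) / (4^n * (n.factorial : ℝ)) := by
  induction n with
  | zero => simp [poch]
  | succ n ih =>
    have h1 : (2*(n+1)+1).factorial = (2*n+3) * ((2*n+2) * (2*n+1).factorial) := by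
      rw [show 2*(n+1)+1 = (2*n+2)+1 from by ring, Nat.factorial_succ,
        show 2*n+2 = (2*n+1)+1 from rfl, Nat.factorial_succ]
    have key : ((2*(n+1)+1).factorial : ℝ) = (2*(n:ℝ)+3) * ((2*(n:ℝ)+2) * ((2*n+1).factorial:ℝ)) := by
      rw [h1]; push_cast; ring
    have key2 : ((n+1).factorial : ℝ) = ((n:ℝ)+1) * (n.factorial:ℝ) := by
      rw [Nat.factorial_succ]; push_cast; ring
    have h2 : ((2*n+1).factorial : ℝ) ≠ 0 := Nat.cast_ne_zero.mpr (Nat.factorial_ne_zero _)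
    have h3 : ((n).factorial : ℝ) ≠ 0 := Nat.cast_ne_zero.mpr (Nat.factorial_ne_zero _)
    rw [poch_succ, ih, key, key2]
    field_simp
    ring

theorem stmt_7 (β α l : ℝ) (hβ : 1 ≤ β) (hα : α < β + 1) (hl : l ≠ 0)
    (c : ℝ) (hc : c = -α / (2 * β) + 1 / (2 * β) + 1 / 2) (x : ℝ) (hx : 0 < x) :
    HasDerivAt (fun y : ℝ => y ^ (β - α + 1) / (β - α + 1) *
        ∑' n : ℕ, poch c n / (poch (c + 1) n * poch (3/2) n) *
          (-(l ^ 2 * y ^ (2 * β)) / 4) ^ n / (n.factorial : ℝ))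
      (Real.sin (l * x ^ β) / (l * x ^ α)) x := by
  have hβ0 : (0:ℝ) < β := by linarith
  have he : (0:ℝ) < β - α + 1 := by linarith
  set e := β - α + 1 with he_def
  have hc' : c = e / (2*β) := by rw [hc, he_def]; field_simp; ring
  have hcpos : 0 < c := by rw [hc']; positivity
  -- the coefficient identity
  have coeff : ∀ n : ℕ, poch c n / (poch (c+1) n * poch (3/2) n) * (-(l^2)/4)^n
      / (n.factorial : ℝ) / e
      = (-1)^n * l^(2*n) / (((2*n+1).factorial : ℝ) * (e + 2*β*n)) := by
    intro n
    have hQ : 0 < poch (c+1) n := poch_pos (by linarith) n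
    have hen : (0:ℝ) < e + 2*β*n := by positivity
    have h1 : c * (2*β) = e := by rw [hc']; field_simp
    have h2 : (c + n) * (2*β) = e + 2*β*n := by rw [hc']; field_simp
    have hP : poch (c+1) n * e = poch c n * (e + 2*β*n) := by
      calc poch (c+1) n * e = poch (c+1) n * c * (2*β) := by rw [mul_assoc, h1]
        _ = poch c n * (c+n) * (2*β) := by rw [poch_shift]
        _ = poch c n * (e + 2*β*n) := by rw [mul_assoc, h2]
    have hPval : poch c n = e * poch (c+1) n / (e + 2*β*n) := by
      rw [eq_div_iff hen.ne']; linarith [hP]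
    have hpow : (-(l ^ 2) / 4 : ℝ) ^ n = (-1)^n * l^(2*n) / 4^n := by
      rw [div_pow, neg_pow, pow_mul]
    have h2f : ((2*n+1).factorial : ℝ) ≠ 0 := Nat.cast_ne_zero.mpr (Nat.factorial_ne_zero _)
    have h3f : ((n).factorial : ℝ) ≠ 0 := Nat.cast_ne_zero.mpr (Nat.factorial_ne_zero _)
    rw [hPval, poch_three_halves, hpow]
    field_simp
  -- setup for termwise differentiation
  have hx2 : (0:ℝ) < x/2 := by linarith
  set t : Set ℝ := Set.Ioo (x/2) (x+1) with ht_def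
  have hxt : x ∈ t := ⟨by linarith, by linarith⟩
  have hyt : ∀ y ∈ t, (0:ℝ) < y := fun y hy => lt_trans hx2 hy.1
  set C0 := (x/2)^(e-1) + (x+1)^(e-1) with hC0
  have hC0pos : 0 < C0 := by rw [hC0]; positivity
  set r := l^2 * (x+1)^(2*β) with hr
  have hrpos : 0 ≤ r := by rw [hr]; positivity
  have habs : ∀ n : ℕ, |(-1:ℝ)^n * l^(2*n)| = l^(2*n) := by
    intro n
    rw [abs_mul, abs_pow, abs_pow, abs_neg, abs_one, one_pow, one_mul, pow_mul, pow_mul, sq_abs]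
  have hlnn : ∀ n : ℕ, (0:ℝ) ≤ l^(2*n) := by
    intro n; rw [pow_mul]; positivity
  -- key derivative of the clean series
  have key : HasDerivAt (fun z : ℝ => ∑' n : ℕ,
      (-1)^n * l^(2*n) / (((2*n+1).factorial : ℝ) * (e + 2*β*(n:ℝ))) * z ^ (e + 2*β*(n:ℝ)))
      (∑' n : ℕ, (-1)^n * (l^(2*n) / ((2*n+1).factorial : ℝ) * x ^ (e - 1 + 2*β*(n:ℝ)))) x := by
    apply hasDerivAt_tsum_of_isPreconnected
      (u := fun n : ℕ => C0 * r^n / (n.factorial : ℝ))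
      (t := t) (y₀ := x) ?hu isOpen_Ioo isPreconnected_Ioo ?hg ?hg' hxt ?hg0 hxt
    case hu =>
      simpa [mul_div_assoc] using (Real.summable_pow_div_factorial r).mul_left C0
    case hg =>
      intro n y hy
      have hy0 : 0 < y := hyt y hy
      have hen : (0:ℝ) < e + 2*β*n := by positivity
      have H := (Real.hasDerivAt_rpow_const (x := y) (p := e + 2*β*(n:ℝ))
        (Or.inl hy0.ne')).const_mul ((-1:ℝ)^n * l^(2*n) / (((2*n+1).factorial : ℝ) * (e + 2*β*(n:ℝ))))
      refine H.congr_deriv ?_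
      have hexp : e + 2*β*(n:ℝ) - 1 = e - 1 + 2*β*(n:ℝ) := by ring
      rw [hexp]
      have h2f : ((2*n+1).factorial : ℝ) ≠ 0 := Nat.cast_ne_zero.mpr (Nat.factorial_ne_zero _)
      field_simp
    case hg' =>
      intro n y hy
      have hy0 : 0 < y := hyt y hy
      have h2f : (0:ℝ) < ((2*n+1).factorial : ℝ) := by positivity
      have hnf : (0:ℝ) < ((n).factorial : ℝ) := by positivity
      have hA : (0:ℝ) ≤ l^(2*n) / ((2*n+1).factorial : ℝ) * y ^ (e - 1 + 2*β*(n:ℝ)) := by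
        have := hlnn n
        positivity
    
      rw [Real.norm_eq_abs, abs_mul, abs_pow, abs_neg, abs_one, one_pow, one_mul,
        abs_of_nonneg hA]
      have h1 : y ^ (e - 1 + 2*β*(n:ℝ)) = y^(e-1) * y^(2*β*(n:ℝ)) := Real.rpow_add hy0 _ _
      have h2 : y^(e-1) ≤ C0 := by
        rcases le_or_gt 0 (e-1) with h | h
        · have hle := Real.rpow_le_rpow hy0.le hy.2.le h
          have h0 : 0 ≤ (x/2)^(e-1) := Real.rpow_nonneg hx2.le _
          rw [hC0]; linarith
        · have hle := Real.rpow_le_rpow_of_nonpos hx2 hy.1.le h.le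
          have h0 : 0 ≤ (x+1)^(e-1) := Real.rpow_nonneg (by linarith) _
          rw [hC0]; linarith
      have h3 : y^(2*β*(n:ℝ)) ≤ (x+1)^(2*β*(n:ℝ)) :=
        Real.rpow_le_rpow hy0.le hy.2.le (by positivity)
      have h4 : (x+1)^(2*β*(n:ℝ)) = ((x+1)^(2*β))^n := by
        rw [Real.rpow_mul (by linarith : (0:ℝ) ≤ x+1), Real.rpow_natCast]
      have hbound : y ^ (e - 1 + 2*β*(n:ℝ)) ≤ C0 * ((x+1)^(2*β))^n := by
        rw [h1, ← h4]
        exact mul_le_mul h2 h3 (Real.rpow_nonneg hy0.le _) hC0pos.le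
      have hfle : l^(2*n) / ((2*n+1).factorial : ℝ) ≤ l^(2*n) / ((n).factorial : ℝ) := by
        apply div_le_div_of_nonneg_left (hlnn n) hnf
        exact_mod_cast Nat.factorial_le (by omega)
      have hrw : C0 * r^n / ((n).factorial : ℝ)
          = l^(2*n) / ((n).factorial : ℝ) * (C0 * ((x+1)^(2*β))^n) := by
        rw [hr, mul_pow, ← pow_mul]; ring
      show l ^ (2 * n) / (((2*n+1).factorial:ℝ)) * y ^ (e - 1 + 2 * β * (n:ℝ))
        ≤ C0 * r ^ n / ((n).factorial : ℝ)
      rw [hrw]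
      exact mul_le_mul hfle hbound (Real.rpow_nonneg hy0.le _)
        (div_nonneg (hlnn n) hnf.le)
    case hg0 =>
      apply Summable.of_norm_bounded
        (g := fun n : ℕ => (x^e/e) * (l^2 * x^(2*β))^n / (n.factorial : ℝ))
      · simpa [mul_div_assoc] using
          (Real.summable_pow_div_factorial (l^2 * x^(2*β))).mul_left (x^e/e)
      · intro n
        have hen : (0:ℝ) < e + 2*β*n := by positivity
        have h2f : (0:ℝ) < ((2*n+1).factorial : ℝ) := by positivity
        have hnf : (0:ℝ) < ((n).factorial : ℝ) := by positivity
        have hxen : x^(e+2*β*(n:ℝ)) = x^e * ((x^(2*β))^n) := by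
          rw [Real.rpow_add hx, Real.rpow_mul hx.le, Real.rpow_natCast]
        rw [Real.norm_eq_abs, abs_mul, abs_div, habs, abs_mul,
          abs_of_pos h2f, abs_of_pos hen,
          abs_of_pos (Real.rpow_pos_of_pos hx _), hxen]
        have hd : l^(2*n) / (((2*n+1).factorial : ℝ) * (e + 2*β*n))
            ≤ l^(2*n) / (((n).factorial : ℝ) * e) := by
          apply div_le_div_of_nonneg_left (hlnn n) (by positivity)
          have hff : ((n).factorial : ℝ) ≤ ((2*n+1).factorial : ℝ) := by
            exact_mod_cast Nat.factorial_le (by omega)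
          have h2bn : (0:ℝ) ≤ 2*β*n := by positivity
          nlinarith [mul_nonneg (sub_nonneg.mpr hff) he.le, mul_nonneg h2f.le h2bn]
        have hrw : (x^e/e) * (l^2 * x^(2*β))^n / ((n).factorial : ℝ)
            = l^(2*n) / (((n).factorial : ℝ) * e) * (x^e * ((x^(2*β))^n)) := by
          rw [mul_pow, ← pow_mul]; field_simp
        rw [hrw]
        exact mul_le_mul_of_nonneg_right hd
          (by positivity)
  -- identify the sum of derivatives with sin
  have hsin : HasSum (fun n : ℕ =>
      (-1)^n * (l^(2*n) / ((2*n+1).factorial : ℝ) * x ^ (e - 1 + 2*β*(n:ℝ))))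
      (Real.sin (l * x^β) / (l * x^α)) := by
    have H := (Real.hasSum_sin (l * x^β)).div_const (l * x^α)
    have heq : ∀ n : ℕ, (-1)^n * (l * x^β)^(2*n+1) / ((2*n+1).factorial : ℝ) / (l * x^α)
        = (-1)^n * (l^(2*n) / ((2*n+1).factorial : ℝ) * x ^ (e - 1 + 2*β*(n:ℝ))) := by
      intro n
      have hp1 : (l * x^β)^(2*n+1) = l^(2*n+1) * x^(β*((2*n+1:ℕ):ℝ)) := by
        rw [mul_pow, ← Real.rpow_natCast (x^β) (2*n+1), ← Real.rpow_mul hx.le]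
      have hexp : β * ((2*n+1 : ℕ):ℝ) = (e - 1 + 2*β*(n:ℝ)) + α := by
        rw [he_def]; push_cast; ring
      have hp2 : x^(β*((2*n+1:ℕ):ℝ)) = x^(e - 1 + 2*β*(n:ℝ)) * x^α := by
        rw [hexp, Real.rpow_add hx]
      rw [hp1, hp2]
      have h2f : ((2*n+1).factorial : ℝ) ≠ 0 := Nat.cast_ne_zero.mpr (Nat.factorial_ne_zero _)
      have hxα : x^α ≠ 0 := (Real.rpow_pos_of_pos hx _).ne'
      field_simp
      ring
    rw [show (fun n : ℕ => (-1:ℝ)^n * (l^(2*n) / ((2*n+1).factorial : ℝ)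
        * x ^ (e - 1 + 2*β*(n:ℝ)))) = fun n : ℕ =>
        (-1)^n * (l * x^β)^(2*n+1) / ((2*n+1).factorial : ℝ) / (l * x^α) from
      funext fun n => (heq n).symm]
    exact H
  rw [← hsin.tsum_eq] at *
  -- transfer to the original function via local equality
  apply key.congr_of_eventuallyEq
  have htmem : t ∈ nhds x := isOpen_Ioo.mem_nhds hxt
  filter_upwards [htmem] with y hy
  have hy0 : 0 < y := hyt y hy
  rw [← tsum_mul_left]
  apply tsum_congr
  intro n
  have hsplit : (-(l^2 * y^(2*β))/4 : ℝ)^n = (-(l^2)/4)^n * y^(2*β*(n:ℝ)) := by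
    rw [show (-(l^2 * y^(2*β))/4 : ℝ) = (-(l^2)/4) * y^(2*β) from by ring, mul_pow,
      ← Real.rpow_natCast (y^(2*β)) n, ← Real.rpow_mul hy0.le]
  have hsum2 : y^e * y^(2*β*(n:ℝ)) = y^(e + 2*β*(n:ℝ)) := (Real.rpow_add hy0 _ _).symm
  calc y^e / e * (poch c n / (poch (c+1) n * poch (3/2) n) * (-(l^2 * y^(2*β))/4)^n
        / (n.factorial : ℝ))
      = (poch c n / (poch (c+1) n * poch (3/2) n) * (-(l^2)/4)^n / (n.factorial : ℝ) / e)
        * (y^e * y^(2*β*(n:ℝ))) := by rw [hsplit]; ring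
    _ = (-1)^n * l^(2*n) / (((2*n+1).factorial : ℝ) * (e + 2*β*(n:ℝ))) * y^(e + 2*β*(n:ℝ)) := by
        rw [coeff n, hsum2]
end

section
/- Let β ≥ 1 and λ ≠ 0. For x > 0, the function G(x) = (1/λ) ln x − (λ x^{2β}/(4β)) · ∑_{n=0}^∞ [ ((1)_n (1)_n) / ((3/2)_n (2)_n (2)_n) ] (−λ²x^{2β}/4)ⁿ/n! satisfies G'(x) = cos(λx^β)/(λx). -/
lemma poch_one (n : ℕ) : poch 1 n = n.factorial := by
  induction n with
  | zero => simp [poch]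
  | succ k ih => rw [poch, Finset.prod_range_succ, ← poch, ih]; push_cast [Nat.factorial_succ]; ring

lemma poch_two (n : ℕ) : poch 2 n = (n+1).factorial := by
  induction n with
  | zero => simp [poch]
  | succ k ih => rw [poch, Finset.prod_range_succ, ← poch, ih]; push_cast [Nat.factorial_succ]; ring

lemma poch_th (n : ℕ) : poch (3/2) n * (4^n * n.factorial) = (2*n+1).factorial := by
  induction n with
  | zero => simp [poch]
  | succ k ih =>
    rw [poch, Finset.prod_range_succ, ← poch]
    have h2 : 2*(k+1)+1 = (2*k+1) + 1 + 1 := by ring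
    rw [h2, Nat.factorial_succ, Nat.factorial_succ, Nat.factorial_succ]
    push_cast
    linear_combination (4*(3/2+(k:ℝ))*((k:ℝ)+1)) * ih

set_option maxHeartbeats 1000000 in
theorem stmt_13 (β l : ℝ) (hβ : 1 ≤ β) (hl : l ≠ 0) (x : ℝ) (hx : 0 < x) :
    HasDerivAt (fun y : ℝ => (1 / l) * Real.log y -
        l * y ^ (2 * β) / (4 * β) *
          ∑' n : ℕ, poch 1 n * poch 1 n /
            (poch (3/2) n * poch 2 n * poch 2 n) *
            (-(l ^ 2 * y ^ (2 * β)) / 4) ^ n / (n.factorial : ℝ))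
      (Real.cos (l * x ^ β) / (l * x)) x := by
  have hβ0 : (0:ℝ) < β := lt_of_lt_of_le one_pos hβ
  set M : ℝ := x + 1 with hMdef
  have hM1 : (1:ℝ) < M := by simp [hMdef]; linarith
  have hM0 : (0:ℝ) < M := by linarith
  set t : Set ℝ := Set.Ioo 0 M with htdef
  have hxt : x ∈ t := ⟨hx, by simp [hMdef]⟩
  set c : ℕ → ℝ := fun n => (-1)^n * l^(2*n+1) / (β * (2*(n:ℝ)+2) * ((2*n+2).factorial : ℝ)) with hcdef
  set g : ℕ → ℝ → ℝ := fun n y => c n * y ^ (2*β*((n:ℝ)+1)) with hgdef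
  set g' : ℕ → ℝ → ℝ := fun n y => c n * (2*β*((n:ℝ)+1)) * y ^ (2*β*((n:ℝ)+1) - 1) with hg'def
  -- |c n| * (2β(n+1)) = |l|^(2n+1)/(2n+2)!
  have hcabs : ∀ n : ℕ, |c n| * (2*β*((n:ℝ)+1)) = |l|^(2*n+1) / ((2*n+2).factorial : ℝ) := by
    intro n
    have hD : (0:ℝ) < β * (2*(n:ℝ)+2) * ((2*n+2).factorial : ℝ) := by positivity
    have hF : (0:ℝ) < ((2*n+2).factorial : ℝ) := by positivity
    rw [hcdef]
    simp only [abs_div, abs_mul, abs_pow, abs_neg, abs_one, one_pow, one_mul, abs_of_pos hD]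
    field_simp
  -- derivative of each term on t
  have hG : ∀ n y, y ∈ t → HasDerivAt (g n) (g' n y) y := by
    intro n y hy
    have h := (Real.hasDerivAt_rpow_const (p := 2*β*((n:ℝ)+1)) (Or.inl (ne_of_gt hy.1))).const_mul (c n)
    have h2 : c n * (2*β*((n:ℝ)+1) * y ^ (2*β*((n:ℝ)+1) - 1)) = g' n y := by
      rw [hg'def]; ring
    exact h2 ▸ h
  -- summable bound
  set A : ℝ := l^2 * M^(2*β) with hAdef
  have hA0 : 0 ≤ A := by positivity
  set u : ℕ → ℝ := fun n => |l| * M^(2*β-1) * (A^n / n.factorial) with hudef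
  have hu : Summable u := by
    apply Summable.mul_left
    exact Real.summable_pow_div_factorial A
  have hMpow : ∀ n : ℕ, M ^ (2*β*((n:ℝ)+1) - 1) = M^(2*β-1) * (M^(2*β))^n := by
    intro n
    rw [← Real.rpow_natCast (M^(2*β)) n, ← Real.rpow_mul hM0.le, ← Real.rpow_add hM0]
    ring_nf
  have hlpow : ∀ n : ℕ, |l|^(2*n+1) = |l| * (l^2)^n := by
    intro n
    rw [pow_succ, pow_mul, sq_abs]
    ring
  have hfacle : ∀ n : ℕ, (n.factorial : ℝ) ≤ ((2*n+2).factorial : ℝ) := by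
    intro n
    exact_mod_cast Nat.factorial_le (by omega)
  have hbound : ∀ n y, y ∈ t → ‖g' n y‖ ≤ u n := by
    intro n y hy
    have hy0 : 0 < y := hy.1
    have hyM : y ≤ M := hy.2.le
    have hn0 : (0:ℝ) ≤ (n:ℝ) := Nat.cast_nonneg n
    have he : (0:ℝ) ≤ 2*β*((n:ℝ)+1) - 1 := by nlinarith
    have h1 : ‖g' n y‖ = |c n| * (2*β*((n:ℝ)+1)) * y ^ (2*β*((n:ℝ)+1) - 1) := by
      rw [hg'def, Real.norm_eq_abs, abs_mul, abs_mul,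
        abs_of_pos (by positivity : (0:ℝ) < 2*β*((n:ℝ)+1)),
        abs_of_pos (Real.rpow_pos_of_pos hy0 _)]
    rw [h1, hcabs n]
    have h2 : y ^ (2*β*((n:ℝ)+1) - 1) ≤ M ^ (2*β*((n:ℝ)+1) - 1) :=
      Real.rpow_le_rpow hy0.le hyM he
    calc |l|^(2*n+1) / ((2*n+2).factorial : ℝ) * y ^ (2*β*((n:ℝ)+1) - 1)
        ≤ |l|^(2*n+1) / ((2*n+2).factorial : ℝ) * M ^ (2*β*((n:ℝ)+1) - 1) := by
          have hnn : (0:ℝ) ≤ |l|^(2*n+1) / ((2*n+2).factorial : ℝ) := by positivity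
          exact mul_le_mul_of_nonneg_left h2 hnn
      _ ≤ |l|^(2*n+1) / (n.factorial : ℝ) * M ^ (2*β*((n:ℝ)+1) - 1) := by
          have hMn : (0:ℝ) ≤ M ^ (2*β*((n:ℝ)+1) - 1) := Real.rpow_nonneg hM0.le _
          apply mul_le_mul_of_nonneg_right _ hMn
          apply div_le_div_of_nonneg_left (by positivity) (by positivity) (hfacle n)
      _ = u n := by
          simp only [hudef]
          rw [hMpow n, hlpow n, hAdef, mul_pow]
          ring
  -- summability at x
  have hg0 : Summable fun n => g n x := by
    have hs := (Real.summable_pow_div_factorial A).mul_left (|l| * M^(2*β))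
    apply Summable.of_norm_bounded hs
    intro n
    have hxM : x ≤ M := by simp [hMdef]
    have he : (0:ℝ) ≤ 2*β*((n:ℝ)+1) := by positivity
    have h1 : ‖g n x‖ = |c n| * x ^ (2*β*((n:ℝ)+1)) := by
      rw [hgdef]
      simp only [Real.norm_eq_abs, abs_mul]
      rw [abs_of_pos (Real.rpow_pos_of_pos hx _)]
    rw [h1]
    have hcle : |c n| ≤ |l|^(2*n+1) / (n.factorial : ℝ) := by
      have hD : (0:ℝ) < β * (2*(n:ℝ)+2) * ((2*n+2).factorial : ℝ) := by positivity
      rw [hcdef]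
      simp only [abs_div, abs_mul, abs_pow, abs_neg, abs_one, one_pow, one_mul, abs_of_pos hD]
      apply div_le_div_of_nonneg_left (by positivity) (by positivity)
      calc (n.factorial : ℝ) ≤ ((2*n+2).factorial : ℝ) := hfacle n
        _ ≤ β * (2*(n:ℝ)+2) * ((2*n+2).factorial : ℝ) := by
            have hn0 : (0:ℝ) ≤ (n:ℝ) := Nat.cast_nonneg n
            have hb1 : (1:ℝ) ≤ β * (2*(n:ℝ)+2) := by nlinarith
            have hfp : (0:ℝ) ≤ ((2*n+2).factorial : ℝ) := by positivity
            nlinarith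
    have hxMp : x ^ (2*β*((n:ℝ)+1)) ≤ M ^ (2*β*((n:ℝ)+1)) := Real.rpow_le_rpow hx.le hxM he
    have hMp : M ^ (2*β*((n:ℝ)+1)) = M^(2*β) * (M^(2*β))^n := by
      rw [← Real.rpow_natCast (M^(2*β)) n, ← Real.rpow_mul hM0.le, ← Real.rpow_add hM0]
      ring_nf
    calc |c n| * x ^ (2*β*((n:ℝ)+1))
        ≤ (|l|^(2*n+1) / (n.factorial : ℝ)) * M ^ (2*β*((n:ℝ)+1)) := by
          apply mul_le_mul hcle hxMp (Real.rpow_nonneg hx.le _) (by positivity)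
      _ = |l| * M^(2*β) * (A^n / n.factorial) := by
          rw [hMp, hlpow n, hAdef, mul_pow]
          ring
  -- the derivative of the series
  have hderivS : HasDerivAt (fun y => ∑' n, g n y) (∑' n, g' n x) x :=
    hasDerivAt_tsum_of_isPreconnected hu isOpen_Ioo isPreconnected_Ioo hG hbound hxt hg0 hxt
  -- log part
  have hlog : HasDerivAt (fun y : ℝ => (1/l) * Real.log y) ((1/l) * x⁻¹) x :=
    (Real.hasDerivAt_log hx.ne').const_mul _
  have hF : HasDerivAt (fun y => (1/l) * Real.log y - ∑' n, g n y)
      ((1/l) * x⁻¹ - ∑' n, g' n x) x := hlog.sub hderivS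
  -- value of the derivative
  set z : ℝ := l * x ^ β with hzdef
  have hsum : HasSum (fun n => g' n x) ((1 - Real.cos z) / (l*x)) := by
    have h0 : HasSum (fun n : ℕ => (-1)^(n+1) * z^(2*(n+1)) / ((2*(n+1)).factorial : ℝ))
        (Real.cos z - ∑ i ∈ Finset.range 1, (-1)^i * z^(2*i) / ((2*i).factorial : ℝ)) :=
      (hasSum_nat_add_iff' 1).mpr (Real.hasSum_cos z)
    simp only [Finset.range_one, Finset.sum_singleton, pow_zero, mul_zero, Nat.factorial_zero,
      Nat.cast_one, div_one, one_mul] at h0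
    have h1 : HasSum (fun n : ℕ => -((-1)^(n+1) * z^(2*(n+1)) / ((2*(n+1)).factorial : ℝ)))
        (1 - Real.cos z) := by
      have := h0.neg
      convert this using 1
      · rfl
      ring
    have h2 : ∀ n : ℕ, g' n x = (1/(l*x)) * (-((-1)^(n+1) * z^(2*(n+1)) / ((2*(n+1)).factorial : ℝ))) := by
      intro n
      have hz2 : z^(2*(n+1)) = l^(2*n+2) * x ^ (β * (2*(n:ℝ)+2)) := by
        rw [hzdef, mul_pow, ← Real.rpow_natCast (x^β) (2*(n+1)), ← Real.rpow_mul hx.le]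
        push_cast
        ring_nf
      have hx2 : x ^ (2*β*((n:ℝ)+1) - 1) = x ^ (β * (2*(n:ℝ)+2)) / x := by
        rw [show (2*β*((n:ℝ)+1) - 1) = β * (2*(n:ℝ)+2) - 1 by ring, Real.rpow_sub hx,
          Real.rpow_one]
      have hfac : ((2*(n+1)).factorial : ℝ) = ((2*n+2).factorial : ℝ) := by norm_num [show 2*(n+1) = 2*n+2 from by ring]
      simp only [hg'def, hcdef]
      rw [hx2, hfac, hz2]
      have h2n2 : ((2*n+2).factorial : ℝ) ≠ 0 := by positivity
      field_simp
      ring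
    have h3 := h1.mul_left (1/(l*x))
    have h4 : (fun n => (1/(l*x)) * (-((-1)^(n+1) * z^(2*(n+1)) / ((2*(n+1)).factorial : ℝ)))) = fun n => g' n x := by
      funext n; rw [h2 n]
    rw [h4] at h3
    convert h3 using 1
    · rfl
    field_simp
  have hval : (1/l) * x⁻¹ - ∑' n, g' n x = Real.cos z / (l*x) := by
    rw [hsum.tsum_eq]
    field_simp
    ring
  rw [← hval]
  -- eventual equality of the two functions
  apply hF.congr_of_eventuallyEq
  filter_upwards [Ioi_mem_nhds hx] with y hy
  have hy0 : (0:ℝ) < y := hy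
  congr 1
  rw [← tsum_mul_left]
  apply tsum_congr
  intro n
  set P : ℝ := y ^ (2*β) with hPdef
  have hP0 : 0 < P := Real.rpow_pos_of_pos hy0 _
  have hyP : y ^ (2*β*((n:ℝ)+1)) = P * P^n := by
    rw [hPdef, ← Real.rpow_natCast (y^(2*β)) n, ← Real.rpow_mul hy0.le, ← Real.rpow_add hy0]
    ring_nf
  have hneg : (-(l^2*P)/4)^n = (-1)^n * (l^2)^n * P^n / 4^n := by
    rw [div_pow, neg_pow, mul_pow]
    ring
  have hpoch3 : poch (3/2) n = ((2*n+1).factorial : ℝ) / (4^n * n.factorial) := by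
    have h := poch_th n
    field_simp
    linarith [h]
  have hfac1 : ((2*n+2).factorial : ℝ) = (2*(n:ℝ)+2) * ((2*n+1).factorial : ℝ) := by
    rw [show 2*n+2 = (2*n+1)+1 from rfl, Nat.factorial_succ]
    push_cast
    ring
  have hfac2 : ((n+1).factorial : ℝ) = ((n:ℝ)+1) * (n.factorial : ℝ) := by
    rw [Nat.factorial_succ]; push_cast; ring
  simp only [hgdef, hcdef]
  rw [hyP, hneg, poch_one, poch_two, hpoch3, hfac1, hfac2]
  have hn1 : (0:ℝ) < ((2*n+1).factorial : ℝ) := by positivity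
  have hn2 : (0:ℝ) < (n.factorial : ℝ) := by positivity
  field_simp
  ring
end
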